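/- Let p ∈ (1, ∞) and f ∈ L^p(∂T, ν). Then for ν-almost every ω ∈ ∂T, lim_{j → −∞} 𝒫f(ω(j)) = f(ω). -/

import Mathlib

open MeasureTheory
open scoped ENNReal NNReal
open Filter Set

/-- The punctured boundary `∂T` of the tree: maps `ω : ℤ → T` with `lev (ω j) = j`
and `par (ω j) = ω (j+1)`. -/
def PBoundary {T : Type*} (par : T → T) (lev : T → ℤ) : Type _ :=
  {ω : ℤ → T // (∀ j : ℤ, lev (ω j) = j) ∧ ∀ j : ℤ, par (ω j) = ω (j + 1)}

/-- The boundary sector `∂T_x`. -/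
def sector {T : Type*} (par : T → T) (lev : T → ℤ) (x : T) : Set (PBoundary par lev) :=
  {ω : PBoundary par lev | ω.1 (lev x) = x}

/-- The σ-algebra on `∂T` generated by the sectors. -/
instance {T : Type*} (par : T → T) (lev : T → ℤ) : MeasurableSpace (PBoundary par lev) :=
  MeasurableSpace.generateFrom (Set.range (sector par lev))

/-- The flow measure `m_ν x = ν (∂T_x)` (as a real number). -/
noncomputable def mnu {T : Type*} (par : T → T) (lev : T → ℤ)
    (ν : Measure (PBoundary par lev)) (x : T) : ℝ :=
  (ν (sector par lev x)).toReal

/-- The Poisson integral operator `𝒫 g (x) = m_ν(x)⁻¹ ∫_{∂T_x} g dν`. -/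
noncomputable def poisson {T : Type*} (par : T → T) (lev : T → ℤ)
    (ν : Measure (PBoundary par lev)) (g : PBoundary par lev → ℝ) (x : T) : ℝ :=
  (mnu par lev ν x)⁻¹ * ∫ ω in sector par lev x, g ω ∂ν

section Aux

variable {T : Type*} {par : T → T} {lev : T → ℤ}

lemma ray_iterate (ω : PBoundary par lev) (j : ℤ) : ∀ n : ℕ, par^[n] (ω.1 j) = ω.1 (j + n)
  | 0 => by simp
  | n + 1 => by
    rw [Function.iterate_succ_apply', ray_iterate ω j n, ω.2.2]
    congr 1
    push_cast
    ring

lemma lev_iterate (hlev : ∀ x : T, lev (par x) = lev x + 1) :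
    ∀ (n : ℕ) (x : T), lev (par^[n] x) = lev x + n
  | 0, x => by simp
  | n + 1, x => by
    rw [Function.iterate_succ_apply', hlev, lev_iterate hlev n x]
    push_cast
    ring

lemma fiber_finite (hfin : ∀ x : T, {y : T | par y = x}.Finite) :
    ∀ (n : ℕ) (z : T), {y : T | par^[n] y = z}.Finite
  | 0, z => by
    simp only [Function.iterate_zero, id_eq, setOf_eq_eq_singleton]
    exact Set.finite_singleton z
  | n + 1, z => by
    have h : {y : T | par^[n + 1] y = z} = ⋃ w ∈ {w : T | par w = z}, {y : T | par^[n] y = w} := by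
      ext y
      simp only [mem_setOf_eq, mem_iUnion, exists_prop, Function.iterate_succ_apply']
      exact ⟨fun h => ⟨par^[n] y, h, rfl⟩, fun ⟨w, hw, hy⟩ => by rw [hy]; exact hw⟩
    rw [h]
    exact (hfin z).biUnion fun w _ => fiber_finite hfin n w

lemma countable_of_tree [Nonempty T] (hfin : ∀ x : T, {y : T | par y = x}.Finite)
    (hconn : ∀ x y : T, ∃ n m : ℕ, par^[n] x = par^[m] y) : Countable T := by
  set t0 := Classical.arbitrary T
  rw [← Set.countable_univ_iff]
  have hsub : (Set.univ : Set T) ⊆ ⋃ (n : ℕ) (m : ℕ), {y : T | par^[n] y = par^[m] t0} := by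
    intro y _
    obtain ⟨n, m, h⟩ := hconn y t0
    exact mem_iUnion.2 ⟨n, mem_iUnion.2 ⟨m, h⟩⟩
  exact Set.Countable.mono hsub
    (Set.countable_iUnion fun n => Set.countable_iUnion fun m => (fiber_finite hfin n _).countable)

lemma measurableSet_sector (x : T) : MeasurableSet (sector par lev x) :=
  MeasurableSpace.measurableSet_generateFrom ⟨x, rfl⟩

lemma self_mem_sector (ω : PBoundary par lev) (j : ℤ) : ω ∈ sector par lev (ω.1 j) := by
  show ω.1 (lev (ω.1 j)) = ω.1 j
  rw [ω.2.1 j]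

lemma mem_sector_eval {ω : PBoundary par lev} {x : T} (h : ω ∈ sector par lev x) {j : ℤ}
    (hj : lev x = j) : ω.1 j = x := by
  subst hj; exact h

lemma sector_eq_biUnion (hlev : ∀ x : T, lev (par x) = lev x + 1) (x : T) (d : ℕ) :
    sector par lev x = ⋃ y ∈ {y : T | par^[d] y = x}, sector par lev y := by
  ext ω
  simp only [mem_iUnion, exists_prop, mem_setOf_eq]
  constructor
  · intro hω
    refine ⟨ω.1 (lev x - d), ?_, self_mem_sector ω _⟩
    rw [ray_iterate ω (lev x - d) d]
    have : lev x - (d : ℤ) + d = lev x := by ring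
    rw [this]
    exact hω
  · rintro ⟨y, hy, hωy⟩
    show ω.1 (lev x) = x
    have hlx : lev x = lev y + d := by rw [← hy, lev_iterate hlev]
    rw [hlx, ← ray_iterate ω (lev y) d, mem_sector_eval hωy rfl, hy]

lemma measurableSet_partition {α ι : Type*} [Countable ι] {A : ι → Set α}
    (hd : Pairwise (Function.onFun Disjoint A)) (hc : ∀ a : α, ∃ i, a ∈ A i)
    {s : Set α} (hs : MeasurableSet[MeasurableSpace.generateFrom (Set.range A)] s) :
    ∃ J : Set ι, s = ⋃ i ∈ J, A i := by
  refine MeasurableSpace.generateFrom_induction (Set.range A)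
    (fun s _ => ∃ J : Set ι, s = ⋃ i ∈ J, A i) ?_ ?_ ?_ ?_ s hs
  · rintro t ⟨i, rfl⟩ _
    exact ⟨{i}, by simp⟩
  · exact ⟨∅, by simp⟩
  · rintro t _ ⟨J, rfl⟩
    refine ⟨Jᶜ, ?_⟩
    ext a
    obtain ⟨i0, hi0⟩ := hc a
    simp only [mem_compl_iff, mem_iUnion, exists_prop, not_exists, not_and]
    constructor
    · intro h
      refine ⟨i0, fun hJ => h i0 hJ hi0, hi0⟩
    · rintro ⟨i, hiJ, hai⟩ i' hi'J hai'
      refine hiJ ?_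
      have : i = i' := by
        by_contra hne
        exact (Set.disjoint_left.mp (hd hne) hai) hai'
      rwa [this]
  · rintro g _ ih
    choose J hJ using ih
    refine ⟨⋃ n, J n, ?_⟩
    ext a
    simp only [mem_iUnion, exists_prop]
    constructor
    · rintro ⟨n, ha⟩
      rw [hJ n] at ha
      obtain ⟨i, hiJ, hai⟩ := mem_iUnion₂.mp ha
      exact ⟨i, ⟨n, hiJ⟩, hai⟩
    · rintro ⟨i, ⟨n, hiJ⟩, hai⟩
      exact ⟨n, by rw [hJ n]; exact mem_iUnion₂.mpr ⟨i, hiJ, hai⟩⟩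

end Aux

lemma levy_on_sector {T : Type*} [Nonempty T] (par : T → T) (lev : T → ℤ)
    (hlev : ∀ x : T, lev (par x) = lev x + 1)
    (hfin : ∀ x : T, {y : T | par y = x}.Finite)
    (hconn : ∀ x y : T, ∃ n m : ℕ, par^[n] x = par^[m] y)
    (ν : Measure (PBoundary par lev))
    (hν : ∀ x : T, 0 < ν (sector par lev x) ∧ ν (sector par lev x) < ⊤)
    (p : ℝ) (hp : 1 < p)
    (f : PBoundary par lev → ℝ) (hf : MemLp f (ENNReal.ofReal p) ν)
    (ω0 : PBoundary par lev) (K : ℤ) :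
    ∀ᵐ ω ∂(ν.restrict (sector par lev (ω0.1 K))),
      Filter.Tendsto (fun j : ℤ => poisson par lev ν f (ω.1 j)) Filter.atBot (nhds (f ω)) := by
  haveI : Countable T := countable_of_tree hfin hconn
  set b := ω0.1 K with hb
  have hlevb : lev b = K := ω0.2.1 K
  set S := sector par lev b with hSdef
  set μ := ν.restrict S with hμ
  haveI : IsFiniteMeasure μ := ⟨by rw [hμ, Measure.restrict_apply_univ]; exact (hν b).2⟩
  -- the filtration
  let ℱ : Filtration ℕ (inferInstance : MeasurableSpace (PBoundary par lev)) :=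
  { seq := fun n => MeasurableSpace.generateFrom (sector par lev '' {x : T | lev x = K - (n : ℤ)})
    mono' := by
      intro n m hnm
      apply MeasurableSpace.generateFrom_le
      rintro t ⟨x, hx, rfl⟩
      rw [sector_eq_biUnion hlev x (m - n)]
      apply MeasurableSet.biUnion ((fiber_finite hfin (m - n) x).countable)
      intro y hy
      apply MeasurableSpace.measurableSet_generateFrom
      refine ⟨y, ?_, rfl⟩
      have h1 := lev_iterate hlev (m - n) y
      rw [hy] at h1
      simp only [Set.mem_setOf_eq] at hx ⊢
      have h2 : ((m - n : ℕ) : ℤ) = (m : ℤ) - n := by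
        have : (n : ℤ) ≤ m := by exact_mod_cast hnm
        omega
      omega
    le' := by
      intro n
      apply MeasurableSpace.generateFrom_le
      rintro t ⟨x, _, rfl⟩
      exact measurableSet_sector x }
  have hℱapp : ∀ n : ℕ, (ℱ n : MeasurableSpace (PBoundary par lev)) =
      MeasurableSpace.generateFrom (sector par lev '' {x : T | lev x = K - (n : ℤ)}) := fun n => rfl
  have hSF0 : MeasurableSet[ℱ 0] S := by
    rw [hℱapp 0]
    exact MeasurableSpace.measurableSet_generateFrom ⟨b, by simp [hlevb], rfl⟩
  have hSM : MeasurableSet[⨆ n, ℱ n] S :=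
    (le_iSup (fun n => (ℱ n : MeasurableSpace (PBoundary par lev))) 0) _ hSF0
  -- intersecting with S lands in ⨆ n, ℱ n
  have hM_inter : ∀ A : Set (PBoundary par lev), MeasurableSet A →
      MeasurableSet[⨆ n, ℱ n] (A ∩ S) := by
    intro A hA
    let m' : MeasurableSpace (PBoundary par lev) :=
    { MeasurableSet' := fun B => MeasurableSet[⨆ n, ℱ n] (B ∩ S)
      measurableSet_empty := by simp
      measurableSet_compl := by
        intro B hB
        have h : Bᶜ ∩ S = S \ (B ∩ S) := by
          ext a; by_cases h : a ∈ S <;> simp [h]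
        show MeasurableSet[⨆ n, ℱ n] (Bᶜ ∩ S)
        rw [h]
        exact hSM.diff hB
      measurableSet_iUnion := by
        intro g hg
        show MeasurableSet[⨆ n, ℱ n] ((⋃ i, g i) ∩ S)
        rw [Set.iUnion_inter]
        exact MeasurableSet.iUnion hg }
    have hle : MeasurableSpace.generateFrom (Set.range (sector par lev)) ≤ m' := by
      apply MeasurableSpace.generateFrom_le
      rintro t ⟨y, rfl⟩
      show MeasurableSet[⨆ n, ℱ n] (sector par lev y ∩ S)
      by_cases hcase : lev y ≤ K
      · set n := (K - lev y).toNat with hn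
        have hn' : (n : ℤ) = K - lev y := Int.toNat_of_nonneg (by omega)
        by_cases hyb : par^[n] y = b
        · have hsub : sector par lev y ∩ S = sector par lev y := by
            rw [Set.inter_eq_left]
            intro ω hω
            show ω.1 (lev b) = b
            rw [hlevb]
            have h2 := ray_iterate ω (lev y) n
            rw [mem_sector_eval hω rfl, hyb] at h2
            have h3 : lev y + (n : ℤ) = K := by omega
            rw [h3] at h2
            exact h2.symm
          rw [hsub]
          refine (le_iSup (fun i => (ℱ i : MeasurableSpace (PBoundary par lev))) n) _ ?_
          rw [hℱapp n]
          exact MeasurableSpace.measurableSet_generateFrom ⟨y, by simp only [Set.mem_setOf_eq]; omega, rfl⟩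
        · have hempty : sector par lev y ∩ S = ∅ := by
            ext ω
            simp only [Set.mem_inter_iff, Set.mem_empty_iff_false, iff_false, not_and]
            intro h1 h2
            apply hyb
            have h3 := ray_iterate ω (lev y) n
            rw [mem_sector_eval h1 rfl] at h3
            have h4 : lev y + (n : ℤ) = K := by omega
            rw [h3, h4]
            rw [← hlevb]
            exact h2
          rw [hempty]
          exact @MeasurableSet.empty _ (⨆ n, (ℱ n : MeasurableSpace (PBoundary par lev)))
      · set n := (lev y - K).toNat with hn
        have hn' : (n : ℤ) = lev y - K := Int.toNat_of_nonneg (by omega)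
        by_cases hby : par^[n] b = y
        · have hsub : sector par lev y ∩ S = S := by
            rw [Set.inter_eq_right]
            intro ω hω
            show ω.1 (lev y) = y
            have h2 := ray_iterate ω K n
            rw [mem_sector_eval hω hlevb, hby] at h2
            have h3 : K + (n : ℤ) = lev y := by omega
            rw [h3] at h2
            exact h2.symm
          rw [hsub]
          exact hSM
        · have hempty : sector par lev y ∩ S = ∅ := by
            ext ω
            simp only [Set.mem_inter_iff, Set.mem_empty_iff_false, iff_false, not_and]
            intro h1 h2
            apply hby
            have h3 := ray_iterate ω K n
            rw [mem_sector_eval h2 hlevb] at h3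
            have h4 : K + (n : ℤ) = lev y := by omega
            rw [h3, h4]
            exact mem_sector_eval h1 rfl
          rw [hempty]
          exact @MeasurableSet.empty _ (⨆ n, (ℱ n : MeasurableSpace (PBoundary par lev)))
    exact hle _ hA
  -- measurable version of f and the indicator function g
  have hfm := hf.aestronglyMeasurable
  set f' := hfm.mk f with hf'def
  have hff' : f =ᵐ[ν] f' := hfm.ae_eq_mk
  have hf'sm : StronglyMeasurable f' := hfm.stronglyMeasurable_mk
  set g := S.indicator f' with hgdef
  have hgM : StronglyMeasurable[⨆ n, ℱ n] g := by
    have hmg : @Measurable _ _ (⨆ n, (ℱ n : MeasurableSpace (PBoundary par lev))) _ g := by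
      intro B hB
      by_cases h0 : (0 : ℝ) ∈ B
      · have h : g ⁻¹' B = (f' ⁻¹' B ∩ S) ∪ Sᶜ := by
          ext a
          by_cases ha : a ∈ S <;>
            simp [hgdef, Set.indicator_of_mem, Set.indicator_of_notMem, ha, h0]
        rw [h]
        exact (hM_inter _ (hf'sm.measurable hB)).union hSM.compl
      · have h : g ⁻¹' B = f' ⁻¹' B ∩ S := by
          ext a
          by_cases ha : a ∈ S <;>
            simp [hgdef, Set.indicator_of_mem, Set.indicator_of_notMem, ha, h0]
        rw [h]
        exact hM_inter _ (hf'sm.measurable hB)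
    exact hmg.stronglyMeasurable
  -- integrability of f on sectors
  have hIntSec : ∀ x : T, IntegrableOn f (sector par lev x) ν := by
    intro x
    haveI : IsFiniteMeasure (ν.restrict (sector par lev x)) :=
      ⟨by rw [Measure.restrict_apply_univ]; exact (hν x).2⟩
    have h1 : MemLp f (ENNReal.ofReal p) (ν.restrict (sector par lev x)) := hf.restrict _
    have h2 : MemLp f 1 (ν.restrict (sector par lev x)) :=
      h1.mono_exponent (by simpa using (ENNReal.one_le_ofReal).mpr hp.le)
    exact memLp_one_iff_integrable.mp h2
  have hf_int_S : Integrable f μ := hIntSec b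
  have hgf : g =ᵐ[μ] f := by
    filter_upwards [ae_restrict_mem (measurableSet_sector b), ae_restrict_of_ae hff'] with a ha hfa
    rw [hgdef]
    simp only [Set.indicator_of_mem ha]
    exact hfa.symm
  have hg_int : Integrable g μ := hf_int_S.congr hgf.symm
  have hmnu_pos : ∀ x : T, 0 < mnu par lev ν x := fun x =>
    ENNReal.toReal_pos (hν x).1.ne' (hν x).2.ne
  have h_atom : ∀ x : T, ∫ ω in sector par lev x, f ω ∂ν = mnu par lev ν x * poisson par lev ν f x := by
    intro x
    rw [poisson, ← mul_assoc, mul_inv_cancel₀ (hmnu_pos x).ne', one_mul]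
  -- finite fibers over b
  have hFib : ∀ n : ℕ, {x : T | par^[n] x = b}.Finite := fun n => fiber_finite hfin n b
  have hlev_fib : ∀ (n : ℕ) (x : T), par^[n] x = b → lev x = K - n := by
    intro n x hx
    have := lev_iterate hlev n x
    rw [hx, hlevb] at this
    omega
  -- simple version of the Poisson function at level K - n
  set ψ : ℕ → PBoundary par lev → ℝ := fun n a =>
    ∑ x ∈ (hFib n).toFinset, (sector par lev x).indicator (fun _ => poisson par lev ν f x) a
    with hψdef
  have hψ_meas : ∀ n : ℕ, StronglyMeasurable[ℱ n] (ψ n) := by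
    intro n
    apply Finset.stronglyMeasurable_fun_sum
    intro x hx
    rw [(hFib n).mem_toFinset] at hx
    apply StronglyMeasurable.indicator (@stronglyMeasurable_const _ _ (ℱ n) _ _)
    rw [hℱapp n]
    exact MeasurableSpace.measurableSet_generateFrom ⟨x, hlev_fib n x hx, rfl⟩
  have hψ_int : ∀ n : ℕ, Integrable (ψ n) ν := by
    intro n
    apply integrable_finset_sum
    intro x _
    rw [integrable_indicator_iff (measurableSet_sector x)]
    exact integrableOn_const (hν x).2.ne
  have hψ_eq : ∀ (n : ℕ) (a : PBoundary par lev), a ∈ S →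
      ψ n a = poisson par lev ν f (a.1 (K - n)) := by
    intro n a ha
    have hxa : par^[n] (a.1 (K - n)) = b := by
      have h1 := ray_iterate a (K - n) n
      have h2 : K - (n : ℤ) + n = K := by ring
      rw [h1, h2]
      exact mem_sector_eval ha hlevb
    have hmem : a ∈ sector par lev (a.1 (K - n)) := self_mem_sector a _
    show (∑ x ∈ (hFib n).toFinset,
      (sector par lev x).indicator (fun _ => poisson par lev ν f x) a) = _
    rw [Finset.sum_eq_single_of_mem (a.1 (K - n)) ((hFib n).mem_toFinset.mpr hxa)]
    · rw [Set.indicator_of_mem hmem]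
    · intro x hx hne
      rw [(hFib n).mem_toFinset] at hx
      apply Set.indicator_of_notMem
      intro hmem'
      apply hne
      have := mem_sector_eval hmem' (hlev_fib n x hx)
      rw [← this]
  -- the conditional expectation of g with respect to ℱ n
  have hcond : ∀ n : ℕ, (fun a => poisson par lev ν f (a.1 (K - n))) =ᵐ[μ] μ[g | ℱ n] := by
    intro n
    haveI : SigmaFinite (μ.trim (ℱ.le n)) := by
      haveI := isFiniteMeasure_trim (μ := μ) (ℱ.le n)
      infer_instance
    have hψμ : (fun a => poisson par lev ν f (a.1 (K - n))) =ᵐ[μ] ψ n := by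
      filter_upwards [ae_restrict_mem (measurableSet_sector b)] with a ha
      exact (hψ_eq n a ha).symm
    apply ae_eq_condExp_of_forall_setIntegral_eq (ℱ.le n) hg_int
    · intro s hs hμs
      exact (((hψ_int n).restrict (s := S)).congr hψμ.symm).integrableOn
    · intro s hs hμs
      -- decompose s as a union of level-(K - n) sectors
      have hrange : sector par lev '' {x : T | lev x = K - (n : ℤ)} =
          Set.range (fun i : {x : T // lev x = K - (n : ℤ)} => sector par lev i.1) :=
        Set.image_eq_range _ _
      have hs2 : MeasurableSet[MeasurableSpace.generateFrom
          (Set.range (fun i : {x : T // lev x = K - (n : ℤ)} => sector par lev i.1))] s := by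
        rw [← hrange]
        exact hs
      have hd : Pairwise (Function.onFun Disjoint
          (fun i : {x : T // lev x = K - (n : ℤ)} => sector par lev i.1)) := by
        intro i j hij
        rw [Function.onFun, Set.disjoint_left]
        intro a hai haj
        apply hij
        apply Subtype.ext
        rw [← mem_sector_eval hai i.2, ← mem_sector_eval haj j.2]
      have hc : ∀ a : PBoundary par lev,
          ∃ i : {x : T // lev x = K - (n : ℤ)}, a ∈ sector par lev i.1 :=
        fun a => ⟨⟨a.1 (K - n), a.2.1 _⟩, self_mem_sector a _⟩
      obtain ⟨J, hsJ⟩ := measurableSet_partition hd hc hs2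
      -- intersect with S : only finitely many atoms survive
      set J' : Set {x : T // lev x = K - (n : ℤ)} := {i | i ∈ J ∧ par^[n] i.1 = b} with hJ'def
      have hJ'fin : J'.Finite := by
        apply Set.Finite.subset ((hFib n).preimage (Set.injOn_of_injective Subtype.val_injective))
        intro i hi
        exact hi.2
      have hsub_S : ∀ i : {x : T // lev x = K - (n : ℤ)}, par^[n] i.1 = b →
          sector par lev i.1 ⊆ S := by
        intro i hib a hai
        show a.1 (lev b) = b
        rw [hlevb]
        have h1 := ray_iterate a (K - n) n
        have h2 : K - (n : ℤ) + n = K := by ring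
        rw [h2, mem_sector_eval hai i.2, hib] at h1
        exact h1.symm
      have hsS : s ∩ S = ⋃ i ∈ hJ'fin.toFinset, sector par lev i.1 := by
        ext a
        simp only [Set.mem_inter_iff, Set.mem_iUnion, exists_prop, Set.Finite.mem_toFinset]
        constructor
        · rintro ⟨has, haS⟩
          rw [hsJ] at has
          obtain ⟨i, hiJ, hai⟩ := Set.mem_iUnion₂.mp has
          refine ⟨i, ⟨hiJ, ?_⟩, hai⟩
          have h1 := ray_iterate a (K - n) n
          have h2 : K - (n : ℤ) + n = K := by ring
          rw [h2, mem_sector_eval hai i.2] at h1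
          rw [h1]
          exact mem_sector_eval haS hlevb
        · rintro ⟨i, ⟨hiJ, hib⟩, hai⟩
          refine ⟨by rw [hsJ]; exact Set.mem_iUnion₂.mpr ⟨i, hiJ, hai⟩, hsub_S i hib hai⟩
      have hrestrict : ∀ h : PBoundary par lev → ℝ,
          ∫ a in s, h a ∂μ = ∫ a in s ∩ S, h a ∂ν := by
        intro h
        rw [hμ, Measure.restrict_restrict (ℱ.le n s hs)]
      -- integrability on atoms
      have hIφ : ∀ i : {x : T // lev x = K - (n : ℤ)},
          IntegrableOn (fun a => poisson par lev ν f (a.1 (K - n))) (sector par lev i.1) ν := by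
        intro i
        apply IntegrableOn.congr_fun
          (integrableOn_const (hν i.1).2.ne :
            IntegrableOn (fun _ => poisson par lev ν f i.1) _ ν)
          _ (measurableSet_sector i.1)
        intro a hai
        show poisson par lev ν f i.1 = poisson par lev ν f (a.1 (K - n))
        rw [mem_sector_eval hai i.2]
      have hIg : ∀ i : {x : T // lev x = K - (n : ℤ)}, par^[n] i.1 = b →
          IntegrableOn g (sector par lev i.1) ν := by
        intro i hib
        apply (hIntSec i.1).congr
        filter_upwards [ae_restrict_mem (measurableSet_sector i.1), ae_restrict_of_ae hff']
          with a hai hfa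
        rw [hgdef]
        simp only [Set.indicator_of_mem (hsub_S i hib hai)]
        exact hfa
      -- atom integral values
      have hatomφ : ∀ i : {x : T // lev x = K - (n : ℤ)},
          ∫ a in sector par lev i.1, poisson par lev ν f (a.1 (K - n)) ∂ν =
            ∫ a in sector par lev i.1, f a ∂ν := by
        intro i
        have heq : Set.EqOn (fun a : PBoundary par lev => poisson par lev ν f (a.1 (K - n)))
            (fun _ => poisson par lev ν f i.1) (sector par lev i.1) := by
          intro a hai
          show poisson par lev ν f (a.1 (K - n)) = poisson par lev ν f i.1
          rw [mem_sector_eval hai i.2]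
        rw [setIntegral_congr_fun (measurableSet_sector i.1) heq]
        rw [setIntegral_const, h_atom i.1, mnu, smul_eq_mul, measureReal_def]
      have hatomg : ∀ i : {x : T // lev x = K - (n : ℤ)}, par^[n] i.1 = b →
          ∫ a in sector par lev i.1, g a ∂ν = ∫ a in sector par lev i.1, f a ∂ν := by
        intro i hib
        have heq : Set.EqOn g f' (sector par lev i.1) := by
          intro a hai
          show g a = f' a
          rw [hgdef]
          simp only [Set.indicator_of_mem (hsub_S i hib hai)]
        rw [setIntegral_congr_fun (measurableSet_sector i.1) heq]
        exact integral_congr_ae (ae_restrict_of_ae hff'.symm)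
      rw [hrestrict, hrestrict, hsS]
      rw [integral_biUnion_finset _ (fun i _ => measurableSet_sector i.1)
        (hd.set_pairwise _) (fun i _ => hIφ i)]
      rw [integral_biUnion_finset _ (fun i _ => measurableSet_sector i.1)
        (hd.set_pairwise _) (fun i hi => hIg i (hJ'fin.mem_toFinset.mp hi).2)]
      apply Finset.sum_congr rfl
      intro i hi
      rw [hatomφ i, hatomg i (hJ'fin.mem_toFinset.mp hi).2]
    · exact ⟨ψ n, hψ_meas n, by
        filter_upwards [ae_restrict_mem (measurableSet_sector b)] with a ha
        exact (hψ_eq n a ha).symm⟩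
  -- Levy martingale convergence
  have hlevy := hg_int.tendsto_ae_condExp hgM
  have hall : ∀ᵐ a ∂μ, ∀ n : ℕ, (μ[g | ℱ n]) a = poisson par lev ν f (a.1 (K - n)) :=
    MeasureTheory.ae_all_iff.mpr fun n => (hcond n).symm
  filter_upwards [hlevy, hall, hgf] with a h1 h2 h3
  have ht : Filter.Tendsto (fun n : ℕ => poisson par lev ν f (a.1 (K - n)))
      Filter.atTop (nhds (f a)) := by
    rw [← h3]
    exact h1.congr fun n => h2 n
  have hφ : Filter.Tendsto (fun j : ℤ => (K - j).toNat) Filter.atBot Filter.atTop := by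
    rw [Filter.tendsto_atTop]
    intro m
    filter_upwards [Filter.eventually_le_atBot (K - m)] with j hj
    omega
  have := ht.comp hφ
  apply this.congr'
  filter_upwards [Filter.eventually_le_atBot K] with j hj
  simp only [Function.comp_apply]
  have h5 : K - ((K - j).toNat : ℤ) = j := by omega
  rw [h5]


/-- For `p ∈ (1,∞)` and `f ∈ L^p(∂T,ν)`, for ν-almost every `ω ∈ ∂T`
one has `lim_{j → −∞} 𝒫f(ω(j)) = f(ω)`. -/
theorem stmt8 {T : Type*} [Nonempty T] (par : T → T) (lev : T → ℤ)
    (hlev : ∀ x : T, lev (par x) = lev x + 1)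
    (hfin : ∀ x : T, {y : T | par y = x}.Finite)
    (hsucc : ∀ x : T, ∃ y : T, par y = x)
    (hconn : ∀ x y : T, ∃ n m : ℕ, par^[n] x = par^[m] y)
    (ν : Measure (PBoundary par lev))
    (hν : ∀ x : T, 0 < ν (sector par lev x) ∧ ν (sector par lev x) < ⊤)
    (p : ℝ) (hp : 1 < p)
    (f : PBoundary par lev → ℝ) (hf : MemLp f (ENNReal.ofReal p) ν) :
    ∀ᵐ ω ∂ν, Filter.Tendsto (fun j : ℤ => poisson par lev ν f (ω.1 j))
      Filter.atBot (nhds (f ω)) := by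
  have hω0 : (sector par lev (Classical.arbitrary T)).Nonempty :=
    MeasureTheory.nonempty_of_measure_ne_zero (hν _).1.ne'
  obtain ⟨ω0, -⟩ := hω0
  have hcover : (⋃ k : ℕ, sector par lev (ω0.1 (k : ℤ))) = Set.univ := by
    ext a
    simp only [Set.mem_iUnion, Set.mem_univ, iff_true]
    obtain ⟨n, m, h⟩ := hconn (a.1 0) (ω0.1 0)
    have h1 := ray_iterate a 0 n
    have h2 := ray_iterate ω0 0 m
    rw [h1, h2] at h
    have hnm : (n : ℤ) = m := by
      have h3 := congrArg lev h
      rw [a.2.1, ω0.2.1] at h3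
      omega
    refine ⟨n, ?_⟩
    show a.1 (lev (ω0.1 (n : ℤ))) = ω0.1 (n : ℤ)
    rw [ω0.2.1]
    rw [zero_add, zero_add] at h
    rw [hnm]
    rw [hnm] at h
    exact h
  rw [MeasureTheory.ae_iff]
  have hdecomp : {a : PBoundary par lev |
      ¬ Filter.Tendsto (fun j : ℤ => poisson par lev ν f (a.1 j)) Filter.atBot (nhds (f a))} =
      ⋃ k : ℕ, {a : PBoundary par lev |
        ¬ Filter.Tendsto (fun j : ℤ => poisson par lev ν f (a.1 j)) Filter.atBot (nhds (f a))} ∩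
        sector par lev (ω0.1 (k : ℤ)) := by
    rw [← Set.inter_iUnion, hcover, Set.inter_univ]
  rw [hdecomp]
  apply measure_iUnion_null
  intro k
  rw [← Measure.restrict_apply' (measurableSet_sector _)]
  exact MeasureTheory.ae_iff.mp
    (levy_on_sector par lev hlev hfin hconn ν hν p hp f hf ω0 (k : ℤ))
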